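/- arXiv:2103.12303 — 5 statements merged into one kernel-verified Lean document; each statement's English description precedes it below -/
import Mathlib

section
/- Let n ≥ 2. The center of the algebra of transpositions 𝔤ₙ is one-dimensional, spanned by the sum of all transpositions: an element x ∈ 𝔤ₙ satisfies ⁅x, y⁆ = 0 for every y ∈ 𝔤ₙ if and only if x is a complex scalar multiple of T = ∑_{1 ≤ i < j ≤ n} (i j). -/
attribute [local instance 100] LieRing.ofAssociativeRing

/-- The algebra of transpositions `𝔤ₙ`: the Lie subalgebra of the complex group
algebra `ℂ[Sₙ]` (with bracket `⁅a, b⁆ = a*b - b*a`) generated by the transpositions. -/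
noncomputable def transpositionAlgebra (n : ℕ) :
    LieSubalgebra ℂ (MonoidAlgebra ℂ (Equiv.Perm (Fin n))) :=
  LieSubalgebra.lieSpan ℂ (MonoidAlgebra ℂ (Equiv.Perm (Fin n)))
    {x | ∃ i j : Fin n, i < j ∧ x = MonoidAlgebra.of ℂ (Equiv.Perm (Fin n)) (Equiv.swap i j)}

/-- The sum `T = ∑_{i < j} (i j)` of all transpositions in `ℂ[Sₙ]`. -/
noncomputable def sumTranspositions (n : ℕ) : MonoidAlgebra ℂ (Equiv.Perm (Fin n)) :=
  ∑ p ∈ Finset.univ.filter (fun p : Fin n × Fin n => p.1 < p.2),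
    MonoidAlgebra.of ℂ (Equiv.Perm (Fin n)) (Equiv.swap p.1 p.2)

open Equiv Equiv.Perm MonoidAlgebra Finset

namespace CT
variable {n : ℕ}

abbrev A (n : ℕ) := MonoidAlgebra ℂ (Equiv.Perm (Fin n))

lemma mul_apply' (a b : A n) (h : Equiv.Perm (Fin n)) :
    (a * b).coeff h = ∑ u : Equiv.Perm (Fin n), a.coeff u * b.coeff (u⁻¹ * h) := by
  rw [MonoidAlgebra.coeff_mul_apply_left, Finsupp.sum_fintype]
  intro u; simp

noncomputable def phi (g : Equiv.Perm (Fin n)) : A n →ₗ[ℂ] ℂ where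
  toFun x := ∑ h : Equiv.Perm (Fin n), if IsConj g h then x.coeff h else 0
  map_add' a b := by
    rw [← Finset.sum_add_distrib]
    refine Finset.sum_congr rfl fun h _ => ?_
    rw [MonoidAlgebra.coeff_add, Finsupp.add_apply]; split <;> simp
  map_smul' c a := by
    rw [RingHom.id_apply, Finset.smul_sum]
    refine Finset.sum_congr rfl fun h _ => ?_
    rw [MonoidAlgebra.coeff_smul, Finsupp.smul_apply]; split <;> simp

lemma phi_single (g t : Equiv.Perm (Fin n)) (c : ℂ) :
    phi g (MonoidAlgebra.single t c) = if IsConj g t then c else 0 := by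
  simp only [phi, LinearMap.coe_mk, AddHom.coe_mk]
  rw [Finset.sum_eq_single t]
  · simp [MonoidAlgebra.coeff_single, Finsupp.single_apply]
  · intro h _ hne; simp [MonoidAlgebra.coeff_single, Finsupp.single_apply, Ne.symm hne]
  · simp

lemma phi_mul_comm (g : Equiv.Perm (Fin n)) (a b : A n) :
    phi g (a * b) = phi g (b * a) := by
  have key : ∀ a b : A n, phi g (a * b) =
      ∑ u : Equiv.Perm (Fin n), ∑ w : Equiv.Perm (Fin n),
        (if IsConj g (u * w) then a.coeff u * b.coeff w else 0) := by
    intro a b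
    simp only [phi, LinearMap.coe_mk, AddHom.coe_mk, mul_apply']
    calc (∑ h : Equiv.Perm (Fin n), if IsConj g h then
            ∑ u : Equiv.Perm (Fin n), a.coeff u * b.coeff (u⁻¹ * h) else 0)
        = ∑ h : Equiv.Perm (Fin n), ∑ u : Equiv.Perm (Fin n),
            (if IsConj g h then a.coeff u * b.coeff (u⁻¹ * h) else 0) := by
          refine Finset.sum_congr rfl fun h _ => ?_
          split
          · rfl
          · simp
      _ = ∑ u : Equiv.Perm (Fin n), ∑ h : Equiv.Perm (Fin n),
            (if IsConj g h then a.coeff u * b.coeff (u⁻¹ * h) else 0) := Finset.sum_comm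
      _ = ∑ u : Equiv.Perm (Fin n), ∑ w : Equiv.Perm (Fin n),
            (if IsConj g (u * w) then a.coeff u * b.coeff w else 0) := by
          refine Finset.sum_congr rfl fun u _ => ?_
          refine (Fintype.sum_bijective (fun w => u * w) (Group.mulLeft_bijective u)
            _ _ fun w => ?_).symm
          simp
  rw [key, key, Finset.sum_comm]
  refine Finset.sum_congr rfl fun u _ => Finset.sum_congr rfl fun w _ => ?_
  have hiff : IsConj g (w * u) ↔ IsConj g (u * w) :=
    ⟨fun h => h.trans (isConj_iff.2 ⟨u, by group⟩),
     fun h => h.trans (isConj_iff.2 ⟨w, by group⟩)⟩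
  rw [if_congr hiff rfl rfl]
  split
  · exact mul_comm _ _
  · rfl

end CT

namespace CT
variable {n : ℕ}

noncomputable def sumT (n : ℕ) : A n :=
  ∑ p ∈ Finset.univ.filter (fun p : Fin n × Fin n => p.1 < p.2),
    MonoidAlgebra.of ℂ (Equiv.Perm (Fin n)) (Equiv.swap p.1 p.2)

lemma sum_ne_eq {M : Type*} [AddCommMonoid M] (f : Fin n × Fin n → M)
    (hf : ∀ i j : Fin n, f (i, j) = f (j, i)) :
    ∑ p ∈ Finset.univ.filter (fun p : Fin n × Fin n => p.1 ≠ p.2), f p =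
      2 • ∑ p ∈ Finset.univ.filter (fun p : Fin n × Fin n => p.1 < p.2), f p := by
  have hsplit : Finset.univ.filter (fun p : Fin n × Fin n => p.1 ≠ p.2) =
      (Finset.univ.filter (fun p : Fin n × Fin n => p.1 < p.2)) ∪
      (Finset.univ.filter (fun p : Fin n × Fin n => p.2 < p.1)) := by
    ext p
    simp only [Finset.mem_filter, Finset.mem_union, Finset.mem_univ, true_and]
    constructor
    · exact fun h => h.lt_or_gt
    · rintro (h | h)
      · exact h.ne
      · exact h.ne'
  have hdisj : Disjoint (Finset.univ.filter (fun p : Fin n × Fin n => p.1 < p.2))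
      (Finset.univ.filter (fun p : Fin n × Fin n => p.2 < p.1)) := by
    rw [Finset.disjoint_left]
    intro p hp1 hp2
    rw [Finset.mem_filter] at hp1 hp2
    exact absurd hp2.2 (not_lt.2 hp1.2.le)
  rw [hsplit, Finset.sum_union hdisj, two_smul]
  congr 1
  refine Finset.sum_nbij' (fun p => p.swap) (fun p => p.swap) ?_ ?_ ?_ ?_ ?_
  · intro p hp; simpa using (Finset.mem_filter.1 hp).2
  · intro p hp; simpa using (Finset.mem_filter.1 hp).2
  · intro p _; simp
  · intro p _; simp
  · intro p _; exact (hf p.2 p.1).symm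

lemma conj_sumT (g : Equiv.Perm (Fin n)) :
    (∑ p ∈ Finset.univ.filter (fun p : Fin n × Fin n => p.1 < p.2),
      MonoidAlgebra.of ℂ (Equiv.Perm (Fin n)) (Equiv.swap (g p.1) (g p.2))) = sumT n := by
  have h2 : (2 : ℕ) • (∑ p ∈ Finset.univ.filter (fun p : Fin n × Fin n => p.1 < p.2),
      MonoidAlgebra.of ℂ (Equiv.Perm (Fin n)) (Equiv.swap (g p.1) (g p.2))) = (2:ℕ) • sumT n := by
    calc (2:ℕ) • (∑ p ∈ Finset.univ.filter (fun p : Fin n × Fin n => p.1 < p.2),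
          MonoidAlgebra.of ℂ (Equiv.Perm (Fin n)) (Equiv.swap (g p.1) (g p.2)))
        = ∑ p ∈ Finset.univ.filter (fun p : Fin n × Fin n => p.1 ≠ p.2),
            MonoidAlgebra.of ℂ (Equiv.Perm (Fin n)) (Equiv.swap (g p.1) (g p.2)) :=
          (sum_ne_eq _ (fun i j => by dsimp only; rw [Equiv.swap_comm])).symm
      _ = ∑ p ∈ Finset.univ.filter (fun p : Fin n × Fin n => p.1 ≠ p.2),
            MonoidAlgebra.of ℂ (Equiv.Perm (Fin n)) (Equiv.swap p.1 p.2) := by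
          refine Finset.sum_nbij' (fun p => (g p.1, g p.2)) (fun p => (g⁻¹ p.1, g⁻¹ p.2))
            ?_ ?_ ?_ ?_ ?_
          · intro p hp
            simp only [Finset.mem_filter, Finset.mem_univ, true_and] at hp ⊢
            exact fun h => hp (g.injective h)
          · intro p hp
            simp only [Finset.mem_filter, Finset.mem_univ, true_and] at hp ⊢
            exact fun h => hp (g⁻¹.injective h)
          · intro p _; simp
          · intro p _; simp
          · intro p _; rfl
      _ = (2:ℕ) • sumT n := by
          rw [sumT]
          exact sum_ne_eq _ (fun i j => by dsimp only; rw [Equiv.swap_comm])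
  rw [← Nat.cast_smul_eq_nsmul ℂ, ← Nat.cast_smul_eq_nsmul ℂ 2 (sumT n)] at h2
  exact smul_right_injective _ (by norm_num : (2:ℂ) ≠ 0) h2

lemma commute_of_sumT (g : Equiv.Perm (Fin n)) :
    MonoidAlgebra.of ℂ (Equiv.Perm (Fin n)) g * sumT n = sumT n * MonoidAlgebra.of ℂ _ g := by
  conv_rhs => rw [← conj_sumT g]
  rw [sumT, Finset.mul_sum, Finset.sum_mul]
  refine Finset.sum_congr rfl fun p _ => ?_
  rw [← map_mul, ← map_mul, Equiv.mul_swap_eq_swap_mul]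

lemma sumT_central (a : A n) : sumT n * a = a * sumT n := by
  induction a using MonoidAlgebra.induction_on with
  | of g => exact (commute_of_sumT g).symm
  | add f g hf hg => rw [mul_add, add_mul, hf, hg]
  | smul r f hf => rw [mul_smul_comm, smul_mul_assoc, hf]

end CT

namespace CT
variable {n : ℕ}

lemma sumT_eq : sumT n = sumTranspositions n := rfl

lemma swap_eq_swap_iff {a b c d : Fin n} (h1 : a < b) (h2 : c < d)
    (h : Equiv.swap a b = Equiv.swap c d) : a = c ∧ b = d := by
  rcases eq_or_ne a c with rfl | hac
  · refine ⟨rfl, ?_⟩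
    have := congrArg (fun σ : Equiv.Perm (Fin n) => σ a) h
    simpa using this
  · rcases eq_or_ne a d with rfl | had
    · have := congrArg (fun σ : Equiv.Perm (Fin n) => σ a) h
      simp [Equiv.swap_apply_right] at this
      exact absurd (h2.trans_le (this ▸ h1.le)) (lt_irrefl _)
    · have := congrArg (fun σ : Equiv.Perm (Fin n) => σ a) h
      rw [Equiv.swap_apply_left, Equiv.swap_apply_of_ne_of_ne hac had] at this
      exact absurd this.symm h1.ne

lemma T_apply_swap {i j : Fin n} (hij : i < j) : (sumTranspositions n).coeff (Equiv.swap i j) = 1 := by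
  rw [sumTranspositions]
  rw [MonoidAlgebra.coeff_sum, Finsupp.finset_sum_apply]
  rw [Finset.sum_eq_single (i, j)]
  · simp [MonoidAlgebra.of_apply, MonoidAlgebra.coeff_single, Finsupp.single_apply]
  · intro p hp hne
    rw [Finset.mem_filter] at hp
    simp only [MonoidAlgebra.of_apply, MonoidAlgebra.coeff_single, Finsupp.single_apply, ite_eq_right_iff]
    intro h
    exact absurd (Prod.ext (swap_eq_swap_iff hp.2 hij h).1 (swap_eq_swap_iff hp.2 hij h).2) hne
  · intro h
    exact absurd ((Finset.mem_filter (s := Finset.univ)).2 ⟨Finset.mem_univ (i, j), hij⟩) h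

lemma T_apply_nonswap {g : Equiv.Perm (Fin n)} (hg : ¬ g.IsSwap) :
    (sumTranspositions n).coeff g = 0 := by
  rw [sumTranspositions, MonoidAlgebra.coeff_sum, Finsupp.finset_sum_apply]
  refine Finset.sum_eq_zero fun p hp => ?_
  rw [Finset.mem_filter] at hp
  simp only [MonoidAlgebra.of_apply, MonoidAlgebra.coeff_single, Finsupp.single_apply, ite_eq_right_iff]
  intro h
  exact absurd ⟨p.1, p.2, hp.2.ne, h.symm⟩ hg

lemma central_conj {x : A n}
    (hc : ∀ σ : Equiv.Perm (Fin n), Commute x (MonoidAlgebra.single σ (1:ℂ)))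
    {g h : Equiv.Perm (Fin n)} (hgh : IsConj g h) : x.coeff h = x.coeff g := by
  obtain ⟨σ, hσ⟩ := isConj_iff.1 hgh
  have h1 : (x * MonoidAlgebra.single σ (1:ℂ)).coeff (σ * g) =
      (MonoidAlgebra.single σ (1:ℂ) * x).coeff (σ * g) := by rw [hc σ]
  rw [MonoidAlgebra.coeff_mul_single_apply, MonoidAlgebra.coeff_single_mul_apply, mul_one, one_mul,
    inv_mul_cancel_left] at h1
  rw [← hσ]
  exact h1

end CT

noncomputable def CT.U (n : ℕ) : LieSubalgebra ℂ (MonoidAlgebra ℂ (Equiv.Perm (Fin n))) :=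
  { Submodule.span ℂ
      ({x | ∃ i j : Fin n, i < j ∧ x = MonoidAlgebra.of ℂ (Equiv.Perm (Fin n)) (Equiv.swap i j)} ∪
       {z | ∃ a b : MonoidAlgebra ℂ (Equiv.Perm (Fin n)), z = a * b - b * a}) with
    lie_mem' := fun {x y} _ _ => Submodule.subset_span (Or.inr ⟨x, y, by rw [Ring.lie_def]⟩) }

lemma CT.phi_comm_span {n : ℕ} {y : MonoidAlgebra ℂ (Equiv.Perm (Fin n))}
    (hy : y ∈ Submodule.span ℂ
      {z : MonoidAlgebra ℂ (Equiv.Perm (Fin n)) | ∃ a b, z = a * b - b * a})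
    (g : Equiv.Perm (Fin n)) : CT.phi g y = 0 := by
  induction hy using Submodule.span_induction with
  | mem z hz => obtain ⟨a, b, rfl⟩ := hz; rw [map_sub, CT.phi_mul_comm, sub_self]
  | zero => exact map_zero _
  | add a b _ _ ha hb => rw [map_add, ha, hb, add_zero]
  | smul c a _ ha => rw [map_smul, ha, smul_zero]

lemma CT.phi_swap_span {n : ℕ} {s : MonoidAlgebra ℂ (Equiv.Perm (Fin n))}
    (hs : s ∈ Submodule.span ℂ
      {x : MonoidAlgebra ℂ (Equiv.Perm (Fin n)) | ∃ i j : Fin n, i < j ∧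
        x = MonoidAlgebra.of ℂ (Equiv.Perm (Fin n)) (Equiv.swap i j)})
    {g : Equiv.Perm (Fin n)} (hg : ¬ g.IsSwap) : CT.phi g s = 0 := by
  induction hs using Submodule.span_induction with
  | mem z hz =>
      obtain ⟨i, j, hij, rfl⟩ := hz
      rw [MonoidAlgebra.of_apply, CT.phi_single, if_neg]
      intro hc
      obtain ⟨σ, hσ⟩ := isConj_iff.1 hc
      refine hg ⟨σ⁻¹ i, σ⁻¹ j, fun h => hij.ne (σ⁻¹.injective h), ?_⟩
      rw [Equiv.swap_apply_apply, ← hσ]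
      group
  | zero => exact map_zero _
  | add a b _ _ ha hb => rw [map_add, ha, hb, add_zero]
  | smul c a _ ha => rw [map_smul, ha, smul_zero]

/-- For `n ≥ 2`, the center of the algebra of transpositions `𝔤ₙ` is the line spanned
by the sum of all transpositions: `x ∈ 𝔤ₙ` commutes (in the Lie sense) with every
element of `𝔤ₙ` iff `x` is a complex scalar multiple of `T`. -/
theorem center_transpositionAlgebra (n : ℕ) (hn : 2 ≤ n)
    (x : MonoidAlgebra ℂ (Equiv.Perm (Fin n))) (hx : x ∈ transpositionAlgebra n) :
    (∀ y ∈ transpositionAlgebra n, ⁅x, y⁆ = 0) ↔ ∃ c : ℂ, x = c • sumTranspositions n := by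
  constructor
  · intro hcomm
    have hof : ∀ i j : Fin n, i < j →
        Commute x (MonoidAlgebra.single (Equiv.swap i j) (1:ℂ)) := by
      intro i j hij
      have hmem : MonoidAlgebra.of ℂ (Equiv.Perm (Fin n)) (Equiv.swap i j) ∈
          transpositionAlgebra n := LieSubalgebra.subset_lieSpan ⟨i, j, hij, rfl⟩
      have h0 := hcomm _ hmem
      rw [Ring.lie_def, sub_eq_zero] at h0
      rw [MonoidAlgebra.of_apply] at h0
      exact h0
    have hcom : ∀ σ : Equiv.Perm (Fin n), Commute x (MonoidAlgebra.single σ (1:ℂ)) := by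
      intro σ
      refine Equiv.Perm.swap_induction_on σ ?_ ?_
      · rw [← MonoidAlgebra.one_def]; exact Commute.one_right x
      · intro f a b hab hf
        rw [show MonoidAlgebra.single (Equiv.swap a b * f) (1:ℂ) =
            MonoidAlgebra.single (Equiv.swap a b) 1 * MonoidAlgebra.single f 1 by
          rw [MonoidAlgebra.single_mul_single, one_mul]]
        refine Commute.mul_right ?_ hf
        rcases hab.lt_or_gt with h | h
        · exact hof a b h
        · rw [Equiv.swap_comm]; exact hof b a h
    have hle : transpositionAlgebra n ≤ CT.U n :=
      (LieSubalgebra.lieSpan_le).2 (fun z hz => Submodule.subset_span (Or.inl hz))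
    have hxU : x ∈ Submodule.span ℂ
        ({x | ∃ i j : Fin n, i < j ∧
            x = MonoidAlgebra.of ℂ (Equiv.Perm (Fin n)) (Equiv.swap i j)} ∪
         {z | ∃ a b : MonoidAlgebra ℂ (Equiv.Perm (Fin n)), z = a * b - b * a}) := hle hx
    rw [Submodule.span_union] at hxU
    obtain ⟨s, hs, y, hy, hxsy⟩ := Submodule.mem_sup.1 hxU
    have hphiy : ∀ g, CT.phi g y = 0 := fun g => CT.phi_comm_span hy g
    have hconj : ∀ g h : Equiv.Perm (Fin n), IsConj g h → x.coeff h = x.coeff g :=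
      fun _ _ h => CT.central_conj hcom h
    have hcard : ∀ g : Equiv.Perm (Fin n), CT.phi g x =
        (↑(Finset.univ.filter (fun h => IsConj g h)).card) * x.coeff g := by
      intro g
      simp only [CT.phi, LinearMap.coe_mk, AddHom.coe_mk]
      calc (∑ h : Equiv.Perm (Fin n), if IsConj g h then x.coeff h else 0)
          = ∑ h : Equiv.Perm (Fin n), if IsConj g h then x.coeff g else 0 := by
            refine Finset.sum_congr rfl fun h _ => ?_
            split
            · next hc => rw [hconj g h hc]
            · rfl
        _ = _ := by
            rw [← Finset.sum_filter, Finset.sum_const, nsmul_eq_mul]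
    have hns : ∀ g : Equiv.Perm (Fin n), ¬ g.IsSwap → x.coeff g = 0 := by
      intro g hg
      have hphis : CT.phi g s = 0 := CT.phi_swap_span hs hg
      have hphix : CT.phi g x = 0 := by
        rw [← hxsy, map_add, hphis, hphiy, add_zero]
      have hpos : 0 < (Finset.univ.filter (fun h => IsConj g h)).card :=
        Finset.card_pos.2 ⟨g, Finset.mem_filter.2 ⟨Finset.mem_univ g, IsConj.refl g⟩⟩
      have := hcard g
      rw [hphix] at this
      exact (mul_eq_zero.1 this.symm).resolve_left (Nat.cast_ne_zero.2 hpos.ne')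
    have h01 : (⟨0, by omega⟩ : Fin n) ≠ ⟨1, by omega⟩ := by simp [Fin.ext_iff]
    refine ⟨x.coeff (Equiv.swap (⟨0, by omega⟩ : Fin n) ⟨1, by omega⟩), ?_⟩
    ext g
    rw [MonoidAlgebra.coeff_smul, Finsupp.smul_apply, smul_eq_mul]
    by_cases hg : Equiv.Perm.IsSwap g
    · obtain ⟨i, j, hij, rfl⟩ := hg
      rcases hij.lt_or_gt with h | h
      · rw [CT.T_apply_swap h, mul_one,
          hconj _ _ (Equiv.Perm.isConj_swap h01 hij)]
      · rw [Equiv.swap_comm] at *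
        rw [CT.T_apply_swap h, mul_one,
          hconj _ _ (Equiv.Perm.isConj_swap h01 hij.symm)]
    · rw [hns g hg, CT.T_apply_nonswap hg, mul_zero]
  · rintro ⟨c, rfl⟩ y hy
    rw [Ring.lie_def, smul_mul_assoc, mul_smul_comm,
      show sumTranspositions n * y = y * sumTranspositions n from CT.sumT_central y,
      sub_self]
end

section
/- Let n ≥ 2. The algebra of transpositions 𝔤ₙ is the internal direct sum of the line ℂ·T spanned by the sum of all transpositions and its derived subalgebra 𝔤ₙ′ = ⁅𝔤ₙ, 𝔤ₙ⁆: as ℂ-subspaces of ℂ[Sₙ] one has ℂ·T + 𝔤ₙ′ = 𝔤ₙ and ℂ·T ∩ 𝔤ₙ′ = {0}; equivalently, every x ∈ 𝔤ₙ is uniquely of the form x = c·T + y with c ∈ ℂ and y ∈ 𝔤ₙ′. -/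
attribute [local instance 100] LieRing.ofAssociativeRing

/-- The derived subalgebra `𝔤ₙ′ = ⁅𝔤ₙ, 𝔤ₙ⁆`: the ℂ-span of all commutators of
elements of the algebra of transpositions. -/
noncomputable def derivedTranspositionAlgebra (n : ℕ) :
    Submodule ℂ (MonoidAlgebra ℂ (Equiv.Perm (Fin n))) :=
  Submodule.span ℂ
    {z | ∃ x ∈ transpositionAlgebra n, ∃ y ∈ transpositionAlgebra n, z = ⁅x, y⁆}

open Equiv

namespace TranspAux

lemma swap_mem (n : ℕ) (i j : Fin n) (h : i ≠ j) :
    MonoidAlgebra.of ℂ (Equiv.Perm (Fin n)) (swap i j) ∈ transpositionAlgebra n := by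
  rcases lt_or_gt_of_ne h with h | h
  · exact LieSubalgebra.subset_lieSpan ⟨i, j, h, rfl⟩
  · exact LieSubalgebra.subset_lieSpan ⟨j, i, h, by rw [Equiv.swap_comm]⟩

lemma derived_le (n : ℕ) :
    derivedTranspositionAlgebra n ≤ (transpositionAlgebra n).toSubmodule := by
  rw [derivedTranspositionAlgebra, Submodule.span_le]
  rintro z ⟨x, hx, y, hy, rfl⟩
  exact (transpositionAlgebra n).lie_mem hx hy

lemma prod1 {α : Type*} [DecidableEq α] (a b c : α) (hab : a ≠ b) (hac : a ≠ c) (hbc : b ≠ c) :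
    swap a b * swap a c * swap b c = swap a c := by
  ext x
  simp only [Equiv.Perm.mul_apply, Equiv.swap_apply_def]
  split_ifs <;> simp_all

lemma prod2 {α : Type*} [DecidableEq α] (a b c : α) (hab : a ≠ b) (hac : a ≠ c) (hbc : b ≠ c) :
    swap b c * swap a b * swap a c = swap a b := by
  ext x
  simp only [Equiv.Perm.mul_apply, Equiv.swap_apply_def]
  split_ifs <;> simp_all

lemma prod3 {α : Type*} [DecidableEq α] (a b c : α) (hab : a ≠ b) (hac : a ≠ c) (hbc : b ≠ c) :
    swap a c * swap a b * swap b c = swap a b := by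
  ext x
  simp only [Equiv.Perm.mul_apply, Equiv.swap_apply_def]
  split_ifs <;> simp_all

lemma prod4 {α : Type*} [DecidableEq α] (a b c : α) (hab : a ≠ b) (hac : a ≠ c) (hbc : b ≠ c) :
    swap b c * swap a c * swap a b = swap a c := by
  ext x
  simp only [Equiv.Perm.mul_apply, Equiv.swap_apply_def]
  split_ifs <;> simp_all

lemma diff_adj (n : ℕ) (a b c : Fin n) (hab : a ≠ b) (hac : a ≠ c) (hbc : b ≠ c) :
    MonoidAlgebra.of ℂ (Equiv.Perm (Fin n)) (swap a b)
      - MonoidAlgebra.of ℂ (Equiv.Perm (Fin n)) (swap a c)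
      ∈ derivedTranspositionAlgebra n := by
  have key : MonoidAlgebra.of ℂ (Equiv.Perm (Fin n)) (swap a b)
      - MonoidAlgebra.of ℂ (Equiv.Perm (Fin n)) (swap a c)
      = (-(1/2) : ℂ) • ⁅⁅MonoidAlgebra.of ℂ (Equiv.Perm (Fin n)) (swap a b),
          MonoidAlgebra.of ℂ (Equiv.Perm (Fin n)) (swap a c)⁆,
          MonoidAlgebra.of ℂ (Equiv.Perm (Fin n)) (swap b c)⁆ := by
    simp only [Ring.lie_def, sub_mul, mul_sub, ← map_mul, ← mul_assoc]
    rw [prod1 a b c hab hac hbc, prod2 a b c hab hac hbc,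
      prod3 a b c hab hac hbc, prod4 a b c hab hac hbc]
    module
  rw [key]
  exact Submodule.smul_mem _ _ (Submodule.subset_span
    ⟨_, (transpositionAlgebra n).lie_mem (swap_mem n a b hab) (swap_mem n a c hac),
     _, swap_mem n b c hbc, rfl⟩)

lemma diff_mem (n : ℕ) (a b c d : Fin n) (hab : a ≠ b) (hcd : c ≠ d) :
    MonoidAlgebra.of ℂ (Equiv.Perm (Fin n)) (swap a b)
      - MonoidAlgebra.of ℂ (Equiv.Perm (Fin n)) (swap c d)
      ∈ derivedTranspositionAlgebra n := by
  by_cases h1 : a = c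
  · subst h1
    by_cases h2 : b = d
    · subst h2; simp only [sub_self]; exact (derivedTranspositionAlgebra n).zero_mem
    · exact diff_adj n a b d hab hcd h2
  · by_cases h2 : a = d
    · subst h2
      rw [Equiv.swap_comm c a]
      by_cases h3 : b = c
      · subst h3; simp only [sub_self]; exact (derivedTranspositionAlgebra n).zero_mem
      · exact diff_adj n a b c hab (Ne.symm hcd) h3
    · by_cases h3 : b = c
      · subst h3
        rw [Equiv.swap_comm a b]
        exact diff_adj n b a d (Ne.symm hab) hcd h2
      · by_cases h4 : b = d
        · subst h4
          rw [Equiv.swap_comm a b, Equiv.swap_comm c b]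
          exact diff_adj n b a c (Ne.symm hab) h3 h1
        · rw [← sub_add_sub_cancel _ (MonoidAlgebra.of ℂ (Equiv.Perm (Fin n)) (swap a c)) _]
          refine Submodule.add_mem _ (diff_adj n a b c hab h1 h3) ?_
          rw [Equiv.swap_comm a c]
          exact diff_adj n c a d (fun h => h1 h.symm) hcd h2

end TranspAux

/-- For `n ≥ 2`, `𝔤ₙ` is the internal direct sum of the line `ℂ·T` spanned by the
sum of all transpositions and the derived subalgebra `𝔤ₙ′`:
`ℂ·T + 𝔤ₙ′ = 𝔤ₙ` and `ℂ·T ∩ 𝔤ₙ′ = {0}` as ℂ-subspaces of `ℂ[Sₙ]`. -/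
theorem transpositionAlgebra_direct_sum (n : ℕ) (hn : 2 ≤ n) :
    Submodule.span ℂ {sumTranspositions n} ⊔ derivedTranspositionAlgebra n =
      (transpositionAlgebra n).toSubmodule ∧
    Submodule.span ℂ {sumTranspositions n} ⊓ derivedTranspositionAlgebra n = ⊥ := by
  set s := Finset.univ.filter (fun p : Fin n × Fin n => p.1 < p.2) with hs
  have hmem_s : ∀ p : Fin n × Fin n, p ∈ s → p.1 < p.2 := by
    intro p hp; simpa [hs] using hp
  have hNpos : 0 < s.card := by
    refine Finset.card_pos.mpr ⟨(⟨0, by omega⟩, ⟨1, by omega⟩), ?_⟩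
    simp [hs, Fin.mk_lt_mk]
  have hNC : ((s.card : ℂ)) ≠ 0 := by exact_mod_cast hNpos.ne'
  have hT_mem : sumTranspositions n ∈ transpositionAlgebra n := by
    rw [sumTranspositions]
    exact Submodule.sum_mem _ fun p hp =>
      TranspAux.swap_mem n p.1 p.2 (hmem_s p hp).ne
  -- generators lie in the sup
  have hgen : ∀ i j : Fin n, i ≠ j →
      MonoidAlgebra.of ℂ (Equiv.Perm (Fin n)) (swap i j)
        ∈ Submodule.span ℂ {sumTranspositions n} ⊔ derivedTranspositionAlgebra n := by
    intro i j hij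
    have hdiff : (s.card : ℂ) • MonoidAlgebra.of ℂ (Equiv.Perm (Fin n)) (swap i j)
        - sumTranspositions n ∈ derivedTranspositionAlgebra n := by
      have heq : (s.card : ℂ) • MonoidAlgebra.of ℂ (Equiv.Perm (Fin n)) (swap i j)
          - sumTranspositions n
          = ∑ p ∈ s, (MonoidAlgebra.of ℂ (Equiv.Perm (Fin n)) (swap i j)
              - MonoidAlgebra.of ℂ (Equiv.Perm (Fin n)) (swap p.1 p.2)) := by
        rw [Finset.sum_sub_distrib, Finset.sum_const, sumTranspositions, ← hs,
          Nat.cast_smul_eq_nsmul]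
      rw [heq]
      exact Submodule.sum_mem _ fun p hp =>
        TranspAux.diff_mem n i j p.1 p.2 hij (hmem_s p hp).ne
    have hrepr : MonoidAlgebra.of ℂ (Equiv.Perm (Fin n)) (swap i j)
        = (s.card : ℂ)⁻¹ • sumTranspositions n
          + (s.card : ℂ)⁻¹ • ((s.card : ℂ) • MonoidAlgebra.of ℂ (Equiv.Perm (Fin n)) (swap i j)
              - sumTranspositions n) := by
      rw [smul_sub, smul_smul, inv_mul_cancel₀ hNC, one_smul]
      abel
    rw [hrepr]
    exact Submodule.add_mem _
      (Submodule.mem_sup_left (Submodule.smul_mem _ _ (Submodule.mem_span_singleton_self _)))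
      (Submodule.mem_sup_right (Submodule.smul_mem _ _ hdiff))
  constructor
  · apply le_antisymm
    · refine sup_le ?_ (TranspAux.derived_le n)
      rw [Submodule.span_le, Set.singleton_subset_iff]
      exact hT_mem
    · -- build a Lie subalgebra on the sup
      have hsup_le : (Submodule.span ℂ {sumTranspositions n} ⊔ derivedTranspositionAlgebra n)
          ≤ (transpositionAlgebra n).toSubmodule := by
        refine sup_le ?_ (TranspAux.derived_le n)
        rw [Submodule.span_le, Set.singleton_subset_iff]
        exact hT_mem
      let M : LieSubalgebra ℂ (MonoidAlgebra ℂ (Equiv.Perm (Fin n))) :=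
        { toSubmodule := Submodule.span ℂ {sumTranspositions n} ⊔ derivedTranspositionAlgebra n
          lie_mem' := fun {x y} hx hy => by
            exact Submodule.mem_sup_right (Submodule.subset_span
              ⟨x, hsup_le hx, y, hsup_le hy, rfl⟩) }
      have hle : transpositionAlgebra n ≤ M := by
        rw [transpositionAlgebra, LieSubalgebra.lieSpan_le]
        rintro x ⟨i, j, hij, rfl⟩
        exact hgen i j hij.ne
      exact fun x hx => hle hx
  · -- intersection is trivial, via the sign character
    let F : Equiv.Perm (Fin n) →* ℂ :=
      (Int.castRingHom ℂ).toMonoidHom.comp ((Units.coeHom ℤ).comp Equiv.Perm.sign)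
    let φ := MonoidAlgebra.lift ℂ ℂ (Equiv.Perm (Fin n)) F
    have hD : derivedTranspositionAlgebra n ≤ LinearMap.ker φ.toLinearMap := by
      rw [derivedTranspositionAlgebra, Submodule.span_le]
      rintro z ⟨x, -, y, -, rfl⟩
      simp [Ring.lie_def, LinearMap.mem_ker, map_mul, mul_comm]
    have hswap : ∀ p ∈ s, φ (MonoidAlgebra.of ℂ (Equiv.Perm (Fin n)) (swap p.1 p.2)) = -1 := by
      intro p hp
      simp [φ, F, MonoidAlgebra.lift_of, Equiv.Perm.sign_swap (hmem_s p hp).ne]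
    have hT : φ (sumTranspositions n) = -(s.card : ℂ) := by
      rw [sumTranspositions, map_sum, ← hs, Finset.sum_congr rfl hswap, Finset.sum_const]
      simp
    rw [eq_bot_iff]
    intro x hx
    rw [Submodule.mem_inf] at hx
    obtain ⟨hx1, hx2⟩ := hx
    rw [Submodule.mem_span_singleton] at hx1
    obtain ⟨c, rfl⟩ := hx1
    have h0 : φ (c • sumTranspositions n) = 0 := hD hx2
    rw [map_smul, hT, smul_eq_mul] at h0
    have hc : c = 0 := by
      rcases mul_eq_zero.mp h0 with h | h
      · exact h
      · exact absurd h (by simpa using hNC)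
    rw [Submodule.mem_bot, hc, zero_smul]
end

section
/- A standard Young tableau is uniquely determined by its content vector: let n be a natural number and let S, T : {0,…,n−1} → ℕ × ℕ be injective functions such that for every k ≤ n−1 the image S({0,…,k}) (respectively T({0,…,k})) is a lower set of ℕ × ℕ in the componentwise order. If for every k, the content of k in S equals the content of k in T, i.e. (S(k))₂ − (S(k))₁ = (T(k))₂ − (T(k))₁ as integers, then S = T. In particular S and T have the same shape. -/
/-- Asymmetric core: if `y ∉ A`, `insert y A` is a lower set, `x ∉ A`,
and `x`, `y` lie on the same diagonal with `x` strictly above `y`, contradiction. -/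
lemma SYT_aux_asym (A : Set (ℕ × ℕ)) (x y : ℕ × ℕ) (hx : x ∉ A) (hy : y ∉ A)
    (hly : IsLowerSet (insert y A))
    (hc : (x.2 : ℤ) - x.1 = (y.2 : ℤ) - y.1) (hlt : x.1 < y.1) : False := by
  obtain ⟨a, b⟩ := x
  obtain ⟨a', b'⟩ := y
  simp only at hc hlt hx hy
  -- z = (a'-1, b') ∈ A
  have hz : ((a' - 1, b') : ℕ × ℕ) ∈ insert (a', b') A :=
    hly (by constructor <;> simp <;> omega) (Set.mem_insert _ _)
  have hzA : ((a' - 1, b') : ℕ × ℕ) ∈ A := by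
    rcases hz with h | h
    · exfalso; have := congrArg Prod.fst h; simp at this; omega
    · exact h
  -- w = (a, b') ∈ A
  have hw : ((a, b') : ℕ × ℕ) ∈ insert (a', b') A :=
    hly (by constructor <;> simp <;> omega) (Set.mem_insert_of_mem _ hzA)
  have hwA : ((a, b') : ℕ × ℕ) ∈ A := by
    rcases hw with h | h
    · exfalso; have := congrArg Prod.fst h; simp at this; omega
    · exact h
  -- b > b', else x ∈ A
  have hbb : b' < b := by
    by_contra h
    push_neg at h
    have hxin : ((a, b) : ℕ × ℕ) ∈ insert (a', b') A :=
      hly (by constructor <;> simp [h]) (Set.mem_insert_of_mem _ hwA)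
    rcases hxin with h' | h'
    · have := congrArg Prod.fst h'; simp at this; omega
    · exact hx h'
  omega

/-- Two addable cells of the same content coincide. -/
lemma SYT_aux (A : Set (ℕ × ℕ)) (x y : ℕ × ℕ) (hx : x ∉ A) (hy : y ∉ A)
    (hlx : IsLowerSet (insert x A)) (hly : IsLowerSet (insert y A))
    (hc : (x.2 : ℤ) - x.1 = (y.2 : ℤ) - y.1) : x = y := by
  rcases lt_trichotomy x.1 y.1 with h | h | h
  · exact absurd (SYT_aux_asym A x y hx hy hly hc h) (by simp)
  · have : x.2 = y.2 := by omega
    exact Prod.ext h this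
  · exact absurd (SYT_aux_asym A y x hy hx hlx hc.symm h) (by simp)

/-- A standard Young tableau is uniquely determined by its content vector.
A standard Young tableau with `n` cells is encoded as an injective function
`T : Fin n → ℕ × ℕ` (sending each entry `k` to the (row, column) coordinates of the
cell containing `k`) such that every initial image `T '' {0, …, k}` is a lower set
of `ℕ × ℕ` in the componentwise order.  If two such tableaux have the same content
vector `k ↦ (column of k) − (row of k)`, then they are equal (in particular they
have the same shape). -/
theorem SYT_eq_of_content_eq (n : ℕ) (S T : Fin n → ℕ × ℕ)
    (hSinj : Function.Injective S) (hTinj : Function.Injective T)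
    (hS : ∀ k : Fin n, IsLowerSet (S '' {m | m ≤ k}))
    (hT : ∀ k : Fin n, IsLowerSet (T '' {m | m ≤ k}))
    (hc : ∀ k : Fin n, ((S k).2 : ℤ) - ((S k).1 : ℤ) = ((T k).2 : ℤ) - ((T k).1 : ℤ)) :
    S = T := by
  have key : ∀ k : ℕ, ∀ hk : k < n, S ⟨k, hk⟩ = T ⟨k, hk⟩ := by
    intro k
    induction k using Nat.strong_induction_on with
    | _ k ih =>
      intro hk
      set kf : Fin n := ⟨k, hk⟩ with hkf
      -- the set of cells filled before step k
      set A : Set (ℕ × ℕ) := S '' {m | m < kf} with hA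
      have hAT : A = T '' {m | m < kf} := by
        apply Set.image_congr
        intro m hm
        exact ih m.val hm m.isLt
      have hsplit : {m : Fin n | m ≤ kf} = insert kf {m | m < kf} := by
        ext m
        simp [le_iff_lt_or_eq]
        tauto
      have hSim : S '' {m | m ≤ kf} = insert (S kf) A := by
        rw [hsplit, Set.image_insert_eq, hA]
      have hTim : T '' {m | m ≤ kf} = insert (T kf) A := by
        rw [hsplit, Set.image_insert_eq, hAT]
      have hxA : S kf ∉ A := by
        rintro ⟨m, hm, hme⟩
        exact absurd (hSinj hme) (ne_of_lt hm)
      have hyA : T kf ∉ A := by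
        rw [hAT]
        rintro ⟨m, hm, hme⟩
        exact absurd (hTinj hme) (ne_of_lt hm)
      exact SYT_aux A (S kf) (T kf) hxA hyA (hSim ▸ hS kf) (hTim ▸ hT kf) (hc kf)
  funext k
  have := key k.val k.isLt
  simpa using this
end

section
/- Let G be a group, V a finite-dimensional complex inner product space, and ρ a representation of G on V whose inner product is G-invariant: ⟪ρ(g)v, ρ(g)w⟫ = ⟪v, w⟫ for all g ∈ G and v, w ∈ V. Let p and q be G-invariant subspaces of V, each nonzero and irreducible (having no G-invariant subspaces other than 0 and itself), such that there is no G-equivariant ℂ-linear isomorphism from p onto q. Then p and q are orthogonal: ⟪v, w⟫ = 0 for all v ∈ p and w ∈ q. -/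
/-- Let `ρ` be a representation of a group `G` on a finite-dimensional complex inner
product space `V` whose inner product is `G`-invariant.  If `p` and `q` are nonzero
irreducible `G`-invariant subspaces of `V` which are not `G`-equivariantly isomorphic,
then `p` and `q` are orthogonal. -/
theorem orthogonal_of_not_iso {G : Type*} [Group G] {V : Type*} [NormedAddCommGroup V]
    [InnerProductSpace ℂ V] [FiniteDimensional ℂ V]
    (ρ : Representation ℂ G V)
    (hinv : ∀ (g : G) (v w : V), (inner ℂ (ρ g v) (ρ g w) : ℂ) = inner ℂ v w)
    (p q : Submodule ℂ V)
    (hp : ∀ (g : G), ∀ v ∈ p, ρ g v ∈ p)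
    (hq : ∀ (g : G), ∀ w ∈ q, ρ g w ∈ q)
    (hpne : p ≠ ⊥) (hqne : q ≠ ⊥)
    (hpirr : ∀ r : Submodule ℂ V, r ≤ p → (∀ (g : G), ∀ v ∈ r, ρ g v ∈ r) → r = ⊥ ∨ r = p)
    (hqirr : ∀ r : Submodule ℂ V, r ≤ q → (∀ (g : G), ∀ v ∈ r, ρ g v ∈ r) → r = ⊥ ∨ r = q)
    (hniso : ¬ ∃ e : p ≃ₗ[ℂ] q, ∀ (g : G) (v : V) (hv : v ∈ p),
      ((e ⟨ρ g v, hp g v hv⟩ : q) : V) = ρ g ((e ⟨v, hv⟩ : q) : V)) :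
    ∀ v ∈ p, ∀ w ∈ q, (inner ℂ v w : ℂ) = 0 := by
  -- ρ g maps qᗮ into qᗮ
  have hρρ : ∀ (g : G) (w : V), ρ g (ρ g⁻¹ w) = w := by
    intro g w
    rw [← Module.End.mul_apply, ← map_mul, mul_inv_cancel, map_one, Module.End.one_apply]
  have hqperp : ∀ (g : G), ∀ x ∈ qᗮ, ρ g x ∈ qᗮ := by
    intro g x hx
    rw [Submodule.mem_orthogonal]
    intro w hw
    have : (inner ℂ (ρ g (ρ g⁻¹ w)) (ρ g x) : ℂ) = inner ℂ (ρ g⁻¹ w) x := hinv g _ _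
    rw [hρρ g w] at this
    rw [this]
    exact (Submodule.mem_orthogonal q x).mp hx _ (hq g⁻¹ w hw)
  -- the orthogonal projection commutes with ρ g
  have hcomm : ∀ (g : G) (v : V),
      ((Submodule.orthogonalProjectionOnto q (ρ g v) : V)) = ρ g (Submodule.orthogonalProjectionOnto q v) := by
    intro g v
    apply Submodule.eq_starProjection_of_mem_orthogonal
    · exact hq g _ (Submodule.orthogonalProjectionOnto q v).2
    · have : ρ g v - ρ g (Submodule.orthogonalProjectionOnto q v) = ρ g (v - Submodule.orthogonalProjectionOnto q v) := by
        rw [map_sub]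
      rw [this]
      exact hqperp g _ (Submodule.sub_starProjection_mem_orthogonal v)
  set T : p →ₗ[ℂ] q := (Submodule.orthogonalProjectionOnto q).toLinearMap.comp p.subtype with hT
  by_cases hT0 : T = 0
  · -- p ⊆ qᗮ
    intro v hv w hw
    have hv' : v ∈ qᗮ := by
      rw [← Submodule.orthogonalProjectionOnto_eq_zero_iff]
      have : T ⟨v, hv⟩ = 0 := by rw [hT0]; rfl
      exact this
    rw [← inner_conj_symm]
    rw [(Submodule.mem_orthogonal q v).mp hv' w hw]
    simp
  · exfalso
    -- kernel and range
    set r := (LinearMap.ker T).map p.subtype with hr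
    have hrle : r ≤ p := by
      rintro x ⟨⟨y, hy⟩, _, rfl⟩; exact hy
    have hrinv : ∀ (g : G), ∀ v ∈ r, ρ g v ∈ r := by
      rintro g v ⟨⟨y, hy⟩, hk, rfl⟩
      refine ⟨⟨ρ g y, hp g y hy⟩, ?_, rfl⟩
      have : ((T ⟨ρ g y, hp g y hy⟩ : q) : V) = ρ g ((T ⟨y, hy⟩ : q) : V) := hcomm g y
      simp only [SetLike.mem_coe, LinearMap.mem_ker] at hk ⊢
      rw [hk] at this
      simp only [Submodule.coe_zero, map_zero] at this
      exact Subtype.ext this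
    set s := (LinearMap.range T).map q.subtype with hs
    have hsle : s ≤ q := by
      rintro x ⟨⟨y, hy⟩, _, rfl⟩; exact hy
    have hsinv : ∀ (g : G), ∀ w ∈ s, ρ g w ∈ s := by
      rintro g w ⟨⟨y, hy⟩, ⟨⟨x, hx⟩, hTx⟩, rfl⟩
      refine ⟨T ⟨ρ g x, hp g x hx⟩, ⟨_, rfl⟩, ?_⟩
      have : ((T ⟨ρ g x, hp g x hx⟩ : q) : V) = ρ g ((T ⟨x, hx⟩ : q) : V) := hcomm g x
      simp only [Submodule.coe_subtype]
      rw [this, hTx]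
    -- Schur
    have hker : LinearMap.ker T = ⊥ := by
      rcases hpirr r hrle hrinv with h | h
      · apply Submodule.map_injective_of_injective p.injective_subtype
        rw [Submodule.map_bot]; exact h
      · exfalso
        apply hT0
        ext ⟨x, hx⟩
        have hx' : x ∈ r := h ▸ hx
        rcases hx' with ⟨⟨y, hy⟩, hk, hxy⟩
        simp only [SetLike.mem_coe, LinearMap.mem_ker] at hk
        simp only [Submodule.coe_subtype] at hxy
        subst hxy
        simp only [LinearMap.zero_apply, ZeroMemClass.coe_zero]
        exact congrArg Subtype.val hk
    have hrange : LinearMap.range T = ⊤ := by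
      rcases hqirr s hsle hsinv with h | h
      · exfalso
        apply hT0
        ext ⟨x, hx⟩
        have h2 : ((T ⟨x, hx⟩ : q) : V) ∈ s := ⟨T ⟨x, hx⟩, ⟨_, rfl⟩, rfl⟩
        rw [h, Submodule.mem_bot] at h2
        simp only [LinearMap.zero_apply, ZeroMemClass.coe_zero]
        exact h2
      · apply Submodule.map_injective_of_injective q.injective_subtype
        rw [Submodule.map_top, Submodule.range_subtype]
        exact h
    have hbij : Function.Bijective T :=
      ⟨LinearMap.ker_eq_bot.mp hker, LinearMap.range_eq_top.mp hrange⟩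
    apply hniso
    refine ⟨LinearEquiv.ofBijective T hbij, ?_⟩
    intro g v hv
    exact hcomm g v
end

section
/- (Weyl's eigenvalue inequalities and their duals.) Let d ≥ 1 and let A and B be d×d complex Hermitian matrices, with C = A + B. Let α, β, γ : {1,…,d} → ℝ be weakly decreasing enumerations of the eigenvalues, with multiplicity, of A, B, and C respectively (i.e., there exist unitary matrices U, V, W with U A U* = diag(α₁,…,α_d), V B V* = diag(β₁,…,β_d), W C W* = diag(γ₁,…,γ_d)). Then for all 1 ≤ i, j, k ≤ d: if i + j = k + 1 then γ_k ≤ α_i + β_j, and if i + j = k + d then α_i + β_j ≤ γ_k. -/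
open scoped Matrix

open Matrix Complex

lemma conj_eq {d : ℕ} (U A : Matrix (Fin d) (Fin d) ℂ)
    (hU : U ∈ Matrix.unitaryGroup (Fin d) ℂ) {D : Matrix (Fin d) (Fin d) ℂ}
    (hdiag : U * A * Uᴴ = D) : A = Uᴴ * D * U := by
  have hsU : star U * U = 1 := (Matrix.mem_unitaryGroup_iff'.mp hU)
  rw [← hdiag, ← Matrix.star_eq_conjTranspose]
  have : star U * (U * A * star U) * U = (star U * U) * A * (star U * U) := by noncomm_ring
  rw [this, hsU, one_mul, mul_one]

lemma quad_eq {d : ℕ} (U A : Matrix (Fin d) (Fin d) ℂ) (α : Fin d → ℝ)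
    (hU : U ∈ Matrix.unitaryGroup (Fin d) ℂ)
    (hdiag : U * A * Uᴴ = Matrix.diagonal fun i => (α i : ℂ)) (x : Fin d → ℂ) :
    star x ⬝ᵥ A *ᵥ x = ((∑ l, α l * Complex.normSq ((U *ᵥ x) l) : ℝ) : ℂ) := by
  rw [conj_eq U A hU hdiag]
  rw [show Uᴴ * (Matrix.diagonal fun i => (α i : ℂ)) * U
      = Uᴴ * ((Matrix.diagonal fun i => (α i : ℂ)) * U) from by noncomm_ring]
  rw [← Matrix.mulVec_mulVec, ← Matrix.mulVec_mulVec]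
  rw [Matrix.dotProduct_mulVec, ← Matrix.star_mulVec]
  simp only [dotProduct, Matrix.mulVec_diagonal, Pi.star_apply]
  push_cast
  congr 1
  ext l
  rw [show star ((U *ᵥ x) l) * ((α l : ℂ) * (U *ᵥ x) l)
      = (α l : ℂ) * (star ((U *ᵥ x) l) * (U *ᵥ x) l) from by ring]
  congr 1
  rw [Complex.normSq_eq_conj_mul_self]
  rfl

lemma norm_eq {d : ℕ} (U : Matrix (Fin d) (Fin d) ℂ)
    (hU : U ∈ Matrix.unitaryGroup (Fin d) ℂ) (x : Fin d → ℂ) :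
    (∑ l, Complex.normSq ((U *ᵥ x) l)) = ∑ l, Complex.normSq (x l) := by
  have h1 : star x ⬝ᵥ (1 : Matrix (Fin d) (Fin d) ℂ) *ᵥ x
      = ((∑ l, (1 : ℝ) * Complex.normSq ((U *ᵥ x) l) : ℝ) : ℂ) := by
    refine quad_eq U 1 (fun _ => 1) hU ?_ x
    have h := Matrix.mem_unitaryGroup_iff.mp hU
    rw [Matrix.star_eq_conjTranspose] at h
    simp [Matrix.mul_one, h]
  simp only [Matrix.one_mulVec, one_mul] at h1
  have h2 : star x ⬝ᵥ x = ((∑ l, Complex.normSq (x l) : ℝ) : ℂ) := by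
    simp only [dotProduct, Pi.star_apply]
    push_cast
    congr 1; ext l
    rw [Complex.normSq_eq_conj_mul_self]; rfl
  rw [h2] at h1
  exact_mod_cast h1.symm

lemma weyl_one {d : ℕ} (A B : Matrix (Fin d) (Fin d) ℂ)
    (α β γ : Fin d → ℝ) (hα : Antitone α) (hβ : Antitone β) (hγ : Antitone γ)
    (hUA : ∃ U ∈ Matrix.unitaryGroup (Fin d) ℂ,
      U * A * Uᴴ = Matrix.diagonal fun i => (α i : ℂ))
    (hUB : ∃ U ∈ Matrix.unitaryGroup (Fin d) ℂ,
      U * B * Uᴴ = Matrix.diagonal fun i => (β i : ℂ))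
    (hUC : ∃ U ∈ Matrix.unitaryGroup (Fin d) ℂ,
      U * (A + B) * Uᴴ = Matrix.diagonal fun i => (γ i : ℂ))
    (i j k : Fin d) (hijk : (i : ℕ) + (j : ℕ) = (k : ℕ)) : γ k ≤ α i + β j := by
  obtain ⟨U, hU, hUd⟩ := hUA
  obtain ⟨V, hV, hVd⟩ := hUB
  obtain ⟨W, hW, hWd⟩ := hUC
  have hd : 1 ≤ d := Nat.one_le_iff_ne_zero.mpr (by rintro rfl; exact absurd i.isLt (by simp))
  -- the constraint matrix
  set M : Matrix (Fin d) (Fin d) ℂ := fun l m =>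
    if l.val < i.val then U l m
    else if h2 : l.val < i.val + j.val then V ⟨l.val - i.val, by omega⟩ m
    else if h3 : l.val + 1 < d then W ⟨l.val + 1, h3⟩ m
    else 0 with hM
  have hrow : ∀ m, M ⟨d - 1, by omega⟩ m = 0 := by
    intro m
    have hk := k.isLt
    rw [hM]
    simp only
    rw [dif_neg (by omega), dif_neg (by omega)]
    exact if_neg (by omega)
  have hdet : M.det = 0 := Matrix.det_eq_zero_of_row_eq_zero _ hrow
  obtain ⟨x, hx0, hMx⟩ := (Matrix.exists_mulVec_eq_zero_iff).mpr hdet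
  -- extract the vanishing conditions
  have hcond : ∀ l : Fin d, (∀ m, M l m = U l m) ∨ (∀ m, M l m = V ⟨l.val - i.val, by omega⟩ m) → True := fun _ _ => trivial
  have hrowval : ∀ l : Fin d, (fun m => M l m) ⬝ᵥ x = 0 := by
    intro l
    have := congrFun hMx l
    simpa [Matrix.mulVec, dotProduct] using this
  have ha0 : ∀ l : Fin d, l.val < i.val → (U *ᵥ x) l = 0 := by
    intro l hl
    have h := hrowval l
    rw [show (fun m => M l m) = fun m => U l m from by
      funext m; rw [hM]; exact if_pos hl] at h
    simpa [Matrix.mulVec, dotProduct] using h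
  have hb0 : ∀ l : Fin d, l.val < j.val → (V *ᵥ x) l = 0 := by
    intro l hl
    have hik : i.val + l.val < d := by have := k.isLt; omega
    have h := hrowval ⟨i.val + l.val, hik⟩
    rw [show (fun m => M ⟨i.val + l.val, hik⟩ m) = fun m => V l m from by
      funext m; rw [hM]; simp only
      rw [if_neg (by omega), dif_pos (by omega)]
      congr 1; ext; simp] at h
    simpa [Matrix.mulVec, dotProduct] using h
  have hc0 : ∀ l : Fin d, k.val < l.val → (W *ᵥ x) l = 0 := by
    intro l hl
    have hll : l.val - 1 < d := by have := l.isLt; omega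
    have h := hrowval ⟨l.val - 1, hll⟩
    rw [show (fun m => M ⟨l.val - 1, hll⟩ m) = fun m => W l m from by
      funext m; rw [hM]; simp only
      have hlv := l.isLt
      rw [if_neg (by omega), dif_neg (by omega), dif_pos (by omega)]
      congr 1; ext; simp; omega] at h
    simpa [Matrix.mulVec, dotProduct] using h
  -- quadratic forms
  set s : ℝ := ∑ l, Complex.normSq (x l) with hs
  have hspos : 0 < s := by
    have : ∃ l, x l ≠ 0 := by
      by_contra h
      push_neg at h
      exact hx0 (funext h)
    obtain ⟨l0, hl0⟩ := this
    exact Finset.sum_pos' (fun l _ => Complex.normSq_nonneg _)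
      ⟨l0, Finset.mem_univ _, Complex.normSq_pos.mpr hl0⟩
  have hsum : (∑ l, γ l * Complex.normSq ((W *ᵥ x) l))
      = (∑ l, α l * Complex.normSq ((U *ᵥ x) l)) + ∑ l, β l * Complex.normSq ((V *ᵥ x) l) := by
    have h1 := quad_eq U A α hU hUd x
    have h2 := quad_eq V B β hV hVd x
    have h3 := quad_eq W (A + B) γ hW hWd x
    rw [Matrix.add_mulVec, dotProduct_add, h1, h2] at h3
    exact_mod_cast h3.symm
  have hαb : (∑ l, α l * Complex.normSq ((U *ᵥ x) l)) ≤ α i * s := by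
    rw [hs, ← norm_eq U hU x, Finset.mul_sum]
    refine Finset.sum_le_sum fun l _ => ?_
    by_cases hl : l.val < i.val
    · rw [ha0 l hl]; simp
    · exact mul_le_mul_of_nonneg_right (hα (by exact Fin.le_def.mpr (by omega)))
        (Complex.normSq_nonneg _)
  have hβb : (∑ l, β l * Complex.normSq ((V *ᵥ x) l)) ≤ β j * s := by
    rw [hs, ← norm_eq V hV x, Finset.mul_sum]
    refine Finset.sum_le_sum fun l _ => ?_
    by_cases hl : l.val < j.val
    · rw [hb0 l hl]; simp
    · exact mul_le_mul_of_nonneg_right (hβ (by exact Fin.le_def.mpr (by omega)))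
        (Complex.normSq_nonneg _)
  have hγb : γ k * s ≤ ∑ l, γ l * Complex.normSq ((W *ᵥ x) l) := by
    rw [hs, ← norm_eq W hW x, Finset.mul_sum]
    refine Finset.sum_le_sum fun l _ => ?_
    by_cases hl : k.val < l.val
    · rw [hc0 l hl]; simp
    · exact mul_le_mul_of_nonneg_right (hγ (by exact Fin.le_def.mpr (by omega)))
        (Complex.normSq_nonneg _)
  have : γ k * s ≤ (α i + β j) * s := by
    rw [add_mul]
    calc γ k * s ≤ _ := hγb
      _ = _ := hsum
      _ ≤ _ := add_le_add hαb hβb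
  exact le_of_mul_le_mul_right (by linarith) hspos

lemma rev_unitary {d : ℕ} (U A : Matrix (Fin d) (Fin d) ℂ) (α : Fin d → ℝ)
    (hU : U ∈ Matrix.unitaryGroup (Fin d) ℂ)
    (hdiag : U * A * Uᴴ = Matrix.diagonal fun i => (α i : ℂ)) :
    ∃ U' ∈ Matrix.unitaryGroup (Fin d) ℂ,
      U' * (-A) * U'ᴴ = Matrix.diagonal fun l => ((-(α (Fin.rev l)) : ℝ) : ℂ) := by
  set e : Equiv.Perm (Fin d) := Fin.revPerm with he
  refine ⟨U.submatrix e id, ?_, ?_⟩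
  · rw [Matrix.mem_unitaryGroup_iff]
    rw [Matrix.star_eq_conjTranspose, Matrix.conjTranspose_submatrix]
    have : U.submatrix (⇑e) id * Uᴴ.submatrix id (⇑e)
        = (U.submatrix (⇑e) (Equiv.refl (Fin d))) * (Uᴴ.submatrix (Equiv.refl (Fin d)) (⇑e)) := rfl
    rw [this, Matrix.submatrix_mul_equiv]
    have hUU : U * Uᴴ = 1 := by
      have h := Matrix.mem_unitaryGroup_iff.mp hU
      rwa [Matrix.star_eq_conjTranspose] at h
    rw [hUU]
    exact Matrix.submatrix_one_equiv e
  · rw [Matrix.conjTranspose_submatrix]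
    have h1 : U.submatrix (⇑e) id * (-A) = (U * (-A)).submatrix (⇑e) id := by
      have : U.submatrix (⇑e) id * (-A)
          = (U.submatrix (⇑e) (Equiv.refl (Fin d))) * ((-A).submatrix (Equiv.refl (Fin d)) id) := rfl
      rw [this, Matrix.submatrix_mul_equiv]
    rw [h1]
    have h2 : (U * (-A)).submatrix (⇑e) id * Uᴴ.submatrix id (⇑e)
        = ((U * (-A)) * Uᴴ).submatrix (⇑e) (⇑e) := by
      have : (U * (-A)).submatrix (⇑e) id * Uᴴ.submatrix id (⇑e)
          = ((U * (-A)).submatrix (⇑e) (Equiv.refl (Fin d))) * (Uᴴ.submatrix (Equiv.refl (Fin d)) (⇑e)) := rfl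
      rw [this, Matrix.submatrix_mul_equiv]
    rw [h2]
    have h3 : U * (-A) * Uᴴ = -(U * A * Uᴴ) := by noncomm_ring
    rw [h3, hdiag]
    rw [show -(Matrix.diagonal fun i => ((α i : ℝ) : ℂ)) = Matrix.diagonal fun i => ((-(α i) : ℝ) : ℂ) from by
      ext l m; simp [Matrix.diagonal]; split <;> simp]
    rw [Matrix.submatrix_diagonal _ _ e.injective]
    congr 1



/-- Weyl's eigenvalue inequalities and their duals.  Let `A`, `B` be `d × d`
complex Hermitian matrices and `C = A + B`, and let `α`, `β`, `γ` be weakly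
decreasing enumerations of the eigenvalues (with multiplicity) of `A`, `B`, `C`
respectively.  Then (indices written 1-based via `i ↦ (i : ℕ) + 1`):
if `i + j = k + 1` then `γ_k ≤ α_i + β_j`, and if `i + j = k + d`
then `α_i + β_j ≤ γ_k`. -/
theorem weyl_inequalities (d : ℕ) (hd : 1 ≤ d)
    (A B : Matrix (Fin d) (Fin d) ℂ) (hA : A.IsHermitian) (hB : B.IsHermitian)
    (α β γ : Fin d → ℝ) (hα : Antitone α) (hβ : Antitone β) (hγ : Antitone γ)
    (hUA : ∃ U ∈ Matrix.unitaryGroup (Fin d) ℂ,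
      U * A * Uᴴ = Matrix.diagonal fun i => (α i : ℂ))
    (hUB : ∃ U ∈ Matrix.unitaryGroup (Fin d) ℂ,
      U * B * Uᴴ = Matrix.diagonal fun i => (β i : ℂ))
    (hUC : ∃ U ∈ Matrix.unitaryGroup (Fin d) ℂ,
      U * (A + B) * Uᴴ = Matrix.diagonal fun i => (γ i : ℂ)) :
    ∀ i j k : Fin d,
      ((((i : ℕ) + 1) + ((j : ℕ) + 1) = ((k : ℕ) + 1) + 1 → γ k ≤ α i + β j) ∧
       (((i : ℕ) + 1) + ((j : ℕ) + 1) = ((k : ℕ) + 1) + d → α i + β j ≤ γ k)) := by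
  intro i j k
  constructor
  · intro h
    exact weyl_one A B α β γ hα hβ hγ hUA hUB hUC i j k (by omega)
  · intro h
    obtain ⟨U, hU, hUd⟩ := hUA
    obtain ⟨V, hV, hVd⟩ := hUB
    obtain ⟨W, hW, hWd⟩ := hUC
    have hA' := rev_unitary U A α hU hUd
    have hB' := rev_unitary V B β hV hVd
    have hC' := rev_unitary W (A + B) γ hW hWd
    have hC'' : ∃ U' ∈ Matrix.unitaryGroup (Fin d) ℂ,
        U' * ((-A) + (-B)) * U'ᴴ = Matrix.diagonal fun l => ((-(γ (Fin.rev l)) : ℝ) : ℂ) := by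
      rw [show (-A) + (-B) = -(A + B) from by abel]
      exact hC'
    have hrevα : Antitone fun l : Fin d => -(α (Fin.rev l)) := by
      intro a b hab
      simp only [neg_le_neg_iff]
      exact hα (Fin.rev_le_rev.mpr hab)
    have hrevβ : Antitone fun l : Fin d => -(β (Fin.rev l)) := by
      intro a b hab
      simp only [neg_le_neg_iff]
      exact hβ (Fin.rev_le_rev.mpr hab)
    have hrevγ : Antitone fun l : Fin d => -(γ (Fin.rev l)) := by
      intro a b hab
      simp only [neg_le_neg_iff]
      exact hγ (Fin.rev_le_rev.mpr hab)
    have hidx : ((Fin.rev i : Fin d) : ℕ) + ((Fin.rev j : Fin d) : ℕ) = ((Fin.rev k : Fin d) : ℕ) := by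
      have h1 := i.isLt
      have h2 := j.isLt
      have h3 := k.isLt
      simp only [Fin.val_rev]
      omega
    have key := weyl_one (-A) (-B) (fun l => -(α (Fin.rev l))) (fun l => -(β (Fin.rev l)))
      (fun l => -(γ (Fin.rev l))) hrevα hrevβ hrevγ hA' hB' hC''
      (Fin.rev i) (Fin.rev j) (Fin.rev k) hidx
    simp only [Fin.rev_rev] at key
    linarith
end
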